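/- Let μ be a Borel probability measure on ℝⁿ with compact support and let θ ∈ (0,1]. Then the function f(h) = dim_{P,θ}^h μ satisfies the Lipschitz bound f(s) − f(t) ≤ s − t for all 0 < t ≤ s; in particular f is Lipschitz continuous on (0,∞). -/

import Mathlib

open MeasureTheory Metric Filter Set Topology
open scoped ENNReal

noncomputable section
open scoped Classical

/-- The support of a Borel measure `μ`: the set of points all of whose
neighborhoods have positive measure. -/
def msupp {n : ℕ} (μ : Measure (EuclideanSpace ℝ (Fin n))) :
    Set (EuclideanSpace ℝ (Fin n)) :=
  {x | ∀ r : ℝ, 0 < r → 0 < μ (Metric.ball x r)}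

/-- The Assouad dimension of a set `E ⊆ ℝⁿ`: the infimum of all `s ≥ 0` for which
there is `C > 0` such that for all `0 < r < R` and `x ∈ E`, the set `E ∩ B(x,R)`
can be covered by at most `C (R/r)^s` balls of radius `r`. -/
def dimA {n : ℕ} (E : Set (EuclideanSpace ℝ (Fin n))) : ℝ :=
  sInf {s : ℝ | 0 ≤ s ∧ ∃ C : ℝ, 0 < C ∧ ∀ x ∈ E, ∀ r R : ℝ, 0 < r → r < R →
    ∃ F : Finset (EuclideanSpace ℝ (Fin n)), (F.card : ℝ) ≤ C * (R / r) ^ s ∧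
      E ∩ Metric.closedBall x R ⊆ ⋃ y ∈ F, Metric.closedBall y r}

/-- The packing dimension of a measure:
`dim_P μ = sup {t ≥ 0 : liminf_{r→0} μ(B(x,r))/r^t = 0 for μ-a.e. x}`. -/
def dimP {n : ℕ} (μ : Measure (EuclideanSpace ℝ (Fin n))) : ℝ :=
  sSup {t : ℝ | 0 ≤ t ∧ ∀ᵐ x ∂μ,
    Filter.liminf (fun r : ℝ =>
      μ (Metric.closedBall x r) / ENNReal.ofReal (r ^ t)) (𝓝[>] 0) = 0}

/-- The potential `F_m^μ(x,r) = ∫ min{1, r^m |x-y|^{-m}} dμ(y)`, with the convention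
that the integrand equals `1` when `y = x`. -/
def Fpot {n : ℕ} (m : ℝ) (μ : Measure (EuclideanSpace ℝ (Fin n)))
    (x : EuclideanSpace ℝ (Fin n)) (r : ℝ) : ℝ≥0∞ :=
  ∫⁻ y, ENNReal.ofReal (if y = x then 1 else min 1 (r ^ m * ‖x - y‖ ^ (-m))) ∂μ

/-- The `m`-dimensional packing dimension profile
`dim_P^m μ = sup {t ≥ 0 : liminf_{r→0} r^{-t} F_m^μ(x,r) = 0 for μ-a.e. x}`. -/
def dimPprofile {n : ℕ} (m : ℝ) (μ : Measure (EuclideanSpace ℝ (Fin n))) : ℝ :=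
  sSup {t : ℝ | 0 ≤ t ∧ ∀ᵐ x ∂μ,
    Filter.liminf (fun r : ℝ => Fpot m μ x r / ENNReal.ofReal (r ^ t)) (𝓝[>] 0) = 0}

/-- The potential
`F_{t,s,θ}^μ(x,r) = ∫ min{1, r^t |x-y|^{-t}, r^{θ(s-t)+t} |x-y|^{-s}} dμ(y)`,
with the convention that the integrand equals `1` when `y = x`. -/
def Ftheta {n : ℕ} (t s θ : ℝ) (μ : Measure (EuclideanSpace ℝ (Fin n)))
    (x : EuclideanSpace ℝ (Fin n)) (r : ℝ) : ℝ≥0∞ :=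
  ∫⁻ y, ENNReal.ofReal (if y = x then 1 else
    min (min 1 (r ^ t * ‖x - y‖ ^ (-t))) (r ^ (θ * (s - t) + t) * ‖x - y‖ ^ (-s))) ∂μ

/-- The `θ`-profile
`dim_{P,θ}^s μ = sup {t ∈ [0,s] : liminf_{r→0} r^{-t} F_{t,s,θ}^μ(x,r) = 0 for μ-a.e. x}`. -/
def dimPtheta {n : ℕ} (s θ : ℝ) (μ : Measure (EuclideanSpace ℝ (Fin n))) : ℝ :=
  sSup {t : ℝ | t ∈ Set.Icc 0 s ∧ ∀ᵐ x ∂μ,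
    Filter.liminf (fun r : ℝ => Ftheta t s θ μ x r / ENNReal.ofReal (r ^ t)) (𝓝[>] 0) = 0}

/-- The critical point `D(μ) = inf_{θ ∈ (0,1)} dim_{P,θ}^n μ` of a measure on `ℝⁿ`. -/
def Dcrit (n : ℕ) (μ : Measure (EuclideanSpace ℝ (Fin n))) : ℝ :=
  sInf ((fun θ : ℝ => dimPtheta (n : ℝ) θ μ) '' Set.Ioo 0 1)


/-- Key identity: `r^(θe+c) * d^(-(e+b)) = (r^θ/d)^e * (r^c * d^(-b))`. -/
lemma key_id (θ r d c b e : ℝ) (hr : 0 < r) (hd : 0 < d) :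
    r ^ (θ * e + c) * d ^ (-(e + b)) = (r ^ θ / d) ^ e * (r ^ c * d ^ (-b)) := by
  rw [Real.rpow_add hr, Real.rpow_mul hr.le, neg_add, Real.rpow_add hd,
    Real.div_rpow (Real.rpow_pos_of_pos hr θ).le hd.le, Real.rpow_neg hd.le e,
    div_eq_mul_inv]
  ring

lemma pos_aux (r d c b : ℝ) (hr : 0 < r) (hd : 0 < d) : 0 < r ^ c * d ^ (-b) :=
  mul_pos (Real.rpow_pos_of_pos hr _) (Real.rpow_pos_of_pos hd _)

/-- Pointwise monotonicity of the integrand in `s`. -/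
lemma integrand_mono (θ t s u r d : ℝ) (hθ : 0 < θ) (hθ1 : θ ≤ 1) (hu : 0 ≤ u)
    (hut : u ≤ t) (hts : t ≤ s) (hr : 0 < r) (hd : 0 < d) :
    min (min 1 (r ^ u * d ^ (-u))) (r ^ (θ * (s - u) + u) * d ^ (-s))
      ≤ min (min 1 (r ^ u * d ^ (-u))) (r ^ (θ * (t - u) + u) * d ^ (-t)) := by
  have hsu : -s = -((s - u) + u) := by ring
  have htu : -t = -((t - u) + u) := by ring
  rw [hsu, htu, key_id θ r d u u (s - u) hr hd, key_id θ r d u u (t - u) hr hd]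
  set x := r ^ θ / d with hx
  have hxpos : 0 < x := div_pos (Real.rpow_pos_of_pos hr θ) hd
  have hP : 0 < r ^ u * d ^ (-u) := pos_aux r d u u hr hd
  rcases le_or_gt x 1 with hx1 | hx1
  · refine min_le_min le_rfl ?_
    exact mul_le_mul_of_nonneg_right
      (Real.rpow_le_rpow_of_exponent_ge hxpos hx1 (by linarith)) hP.le
  · refine le_min (min_le_left _ _) ?_
    refine le_trans (min_le_left _ _) (le_trans (min_le_right _ _) ?_)
    calc r ^ u * d ^ (-u) = 1 * (r ^ u * d ^ (-u)) := by ring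
    _ ≤ x ^ (t - u) * (r ^ u * d ^ (-u)) :=
        mul_le_mul_of_nonneg_right (Real.one_le_rpow hx1.le (by linarith)) hP.le

lemma aux_shift (r d D δ c b : ℝ) (hr : 0 < r) (hd : 0 < d) (hdD : d ≤ D) (hδ : 0 ≤ δ) :
    r ^ (c - δ) * d ^ (-(b - δ)) ≤ (D ^ δ * r ^ (-δ)) * (r ^ c * d ^ (-b)) := by
  have h1 : r ^ (c - δ) = r ^ c * r ^ (-δ) := by
    rw [← Real.rpow_add hr]; ring_nf
  have h2 : d ^ (-(b - δ)) = d ^ (-b) * d ^ δ := by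
    rw [← Real.rpow_add hd]; ring_nf
  rw [h1, h2]
  have hdδ : d ^ δ ≤ D ^ δ := Real.rpow_le_rpow hd.le hdD hδ
  have p1 := Real.rpow_pos_of_pos hr c
  have p2 := Real.rpow_pos_of_pos hd (-b)
  have p3 := Real.rpow_pos_of_pos hr (-δ)
  calc r ^ c * r ^ (-δ) * (d ^ (-b) * d ^ δ)
      = d ^ δ * (r ^ c * r ^ (-δ) * d ^ (-b)) := by ring
    _ ≤ D ^ δ * (r ^ c * r ^ (-δ) * d ^ (-b)) :=
        mul_le_mul_of_nonneg_right hdδ (by positivity)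
    _ = (D ^ δ * r ^ (-δ)) * (r ^ c * d ^ (-b)) := by ring

/-- Pointwise main estimate. -/
lemma integrand_main (θ t s u r d D : ℝ) (hts : t ≤ s) (hus : u ≤ s)
    (hr0 : 0 < r) (hr1 : r ≤ 1) (hd : 0 < d) (hdD : d ≤ D) (hD : 1 ≤ D) :
    min (min 1 (r ^ (u - (s - t)) * d ^ (-(u - (s - t)))))
        (r ^ (θ * (t - (u - (s - t))) + (u - (s - t))) * d ^ (-t))
      ≤ (D ^ (s - t) * r ^ (-(s - t))) *
        min (min 1 (r ^ u * d ^ (-u))) (r ^ (θ * (s - u) + u) * d ^ (-s)) := by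
  set δ := s - t with hδdef
  have hδ : 0 ≤ δ := by simp [hδdef]; linarith
  set K := D ^ δ * r ^ (-δ) with hK
  have hK1 : 1 ≤ K := by
    have h1 : 1 ≤ D ^ δ := Real.one_le_rpow hD hδ
    have h2 : 1 ≤ r ^ (-δ) :=
      Real.one_le_rpow_of_pos_of_le_one_of_nonpos hr0 hr1 (neg_nonpos.mpr hδ)
    nlinarith
  have hK0 : 0 ≤ K := by linarith
  rw [mul_min_of_nonneg _ _ hK0]
  refine le_min ?_ ?_
  · rw [mul_min_of_nonneg _ _ hK0]
    refine le_min ?_ ?_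
    · refine le_trans (min_le_left _ _) (le_trans (min_le_left _ _) (by linarith))
    · refine le_trans (min_le_left _ _) (le_trans (min_le_right _ _) ?_)
      exact aux_shift r d D δ u u hr0 hd hdD hδ
  · refine le_trans (min_le_right _ _) ?_
    rw [show θ * (t - (u - δ)) + (u - δ) = (θ * (s - u) + u) - δ by simp [hδdef]; ring,
      show -t = -(s - δ) by simp [hδdef]]
    exact aux_shift r d D δ (θ * (s - u) + u) s hr0 hd hdD hδ

section Helpers

variable {n : ℕ}

/-- Almost every point lies in the support. -/
lemma ae_mem_msupp (μ : Measure (EuclideanSpace ℝ (Fin n))) :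
    ∀ᵐ x ∂μ, x ∈ msupp μ := by
  rw [MeasureTheory.ae_iff]
  refine measure_null_of_locally_null _ fun x hx => ?_
  simp only [mem_setOf_eq, msupp, not_forall] at hx
  obtain ⟨r, hr, hμ⟩ := hx
  refine ⟨Metric.ball x r, mem_nhdsWithin_of_mem_nhds (Metric.ball_mem_nhds x hr), ?_⟩
  simpa using hμ

/-- Monotonicity of the potential in `s`. -/
lemma Ftheta_mono (μ : Measure (EuclideanSpace ℝ (Fin n))) (x : EuclideanSpace ℝ (Fin n))
    (θ t s u r : ℝ) (hθ : 0 < θ) (hθ1 : θ ≤ 1) (hu : 0 ≤ u) (hut : u ≤ t) (hts : t ≤ s)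
    (hr : 0 < r) : Ftheta u s θ μ x r ≤ Ftheta u t θ μ x r := by
  refine lintegral_mono fun y => ?_
  apply ENNReal.ofReal_le_ofReal
  by_cases hxy : y = x
  · simp [hxy]
  · simp only [hxy, if_false]
    have hd : 0 < ‖x - y‖ := by
      rw [norm_pos_iff, sub_ne_zero]; exact fun h => hxy h.symm
    exact integrand_mono θ t s u r ‖x - y‖ hθ hθ1 hu hut hts hr hd

end Helpers


section Helpers2

variable {n : ℕ}

lemma inv_calc (r δ u : ℝ) (hr : 0 < r) :
    ENNReal.ofReal (r ^ (-δ)) * (ENNReal.ofReal (r ^ (u - δ)))⁻¹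
      = (ENNReal.ofReal (r ^ u))⁻¹ := by
  rw [← ENNReal.ofReal_inv_of_pos (Real.rpow_pos_of_pos hr _),
    ← Real.rpow_neg hr.le (u - δ),
    ← ENNReal.ofReal_mul (Real.rpow_pos_of_pos hr _).le, ← Real.rpow_add hr,
    show -δ + -(u - δ) = -u by ring, Real.rpow_neg hr.le,
    ENNReal.ofReal_inv_of_pos (Real.rpow_pos_of_pos hr _)]

/-- Main comparison: the normalized potential at parameters `(u - (s-t), t)` is controlled
by the normalized potential at `(u, s)`. -/
lemma Ftheta_main (μ : Measure (EuclideanSpace ℝ (Fin n))) (x : EuclideanSpace ℝ (Fin n))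
    (θ t s u r D : ℝ) (hts : t ≤ s) (hus : u ≤ s) (hr0 : 0 < r) (hr1 : r ≤ 1) (hD : 1 ≤ D)
    (hae : ∀ᵐ y ∂μ, y = x ∨ ‖x - y‖ ≤ D) :
    Ftheta (u - (s - t)) t θ μ x r / ENNReal.ofReal (r ^ (u - (s - t)))
      ≤ ENNReal.ofReal (D ^ (s - t)) * (Ftheta u s θ μ x r / ENNReal.ofReal (r ^ u)) := by
  set δ := s - t with hδdef
  have hδ : 0 ≤ δ := by simp only [hδdef]; linarith
  set K := D ^ δ * r ^ (-δ) with hKdef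
  have hK1 : 1 ≤ K := by
    have h1 : 1 ≤ D ^ δ := Real.one_le_rpow hD hδ
    have h2 : 1 ≤ r ^ (-δ) :=
      Real.one_le_rpow_of_pos_of_le_one_of_nonpos hr0 hr1 (neg_nonpos.mpr hδ)
    nlinarith
  have hK0 : 0 ≤ K := by linarith
  have step1 : Ftheta (u - δ) t θ μ x r ≤ ENNReal.ofReal K * Ftheta u s θ μ x r := by
    rw [Ftheta, Ftheta, ← MeasureTheory.lintegral_const_mul' _ _ ENNReal.ofReal_ne_top]
    refine lintegral_mono_ae ?_
    filter_upwards [hae] with y hy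
    rw [← ENNReal.ofReal_mul hK0]
    apply ENNReal.ofReal_le_ofReal
    by_cases hxy : y = x
    · rw [hxy, if_pos rfl, if_pos rfl]; linarith
    · rcases hy with hy | hy
      · exact absurd hy hxy
      · simp only [hxy, if_false]
        have hd : 0 < ‖x - y‖ := by
          rw [norm_pos_iff, sub_ne_zero]; exact fun h => hxy h.symm
        exact integrand_main θ t s u r ‖x - y‖ D hts hus hr0 hr1 hd hy hD
  calc Ftheta (u - δ) t θ μ x r / ENNReal.ofReal (r ^ (u - δ))
      ≤ (ENNReal.ofReal K * Ftheta u s θ μ x r) / ENNReal.ofReal (r ^ (u - δ)) :=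
        ENNReal.div_le_div_right step1 _
    _ = ENNReal.ofReal (D ^ δ) * (Ftheta u s θ μ x r / ENNReal.ofReal (r ^ u)) := by
        rw [hKdef, ENNReal.ofReal_mul (Real.rpow_pos_of_pos (by linarith : (0:ℝ) < D) δ).le,
          div_eq_mul_inv, div_eq_mul_inv, ← inv_calc r δ u hr0]
        ring

lemma liminf_transfer {f g : ℝ → ℝ≥0∞} {c : ℝ≥0∞} (hc : c ≠ ∞)
    (h : ∀ r : ℝ, 0 < r → r ≤ 1 → f r ≤ c * g r)
    (hg : Filter.liminf g (𝓝[>] (0:ℝ)) = 0) : Filter.liminf f (𝓝[>] (0:ℝ)) = 0 := by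
  have ev : ∀ᶠ r in 𝓝[>] (0:ℝ), f r ≤ (((fun _ => c) * g : ℝ → ℝ≥0∞)) r := by
    filter_upwards [Ioc_mem_nhdsGT one_pos] with r hr
    exact h r hr.1 hr.2
  have h1 : Filter.liminf f (𝓝[>] (0:ℝ)) ≤ Filter.liminf (((fun _ => c) * g : ℝ → ℝ≥0∞)) (𝓝[>] (0:ℝ)) :=
    Filter.liminf_le_liminf ev
  have h2 : Filter.liminf (((fun _ => c) * g : ℝ → ℝ≥0∞)) (𝓝[>] (0:ℝ))
      ≤ Filter.limsup (fun _ => c) (𝓝[>] (0:ℝ)) * Filter.liminf g (𝓝[>] (0:ℝ)) := by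
    refine ENNReal.liminf_mul_le (Or.inr (by simp [hg])) (Or.inl (by simp [Filter.limsup_const, hc]))
  rw [Filter.limsup_const, hg, mul_zero] at h2
  exact le_antisymm (h1.trans h2) zero_le

end Helpers2

/-- For a Borel probability measure `μ` with compact support and `θ ∈ (0,1]`,
the function `f(h) = dim_{P,θ}^h μ` satisfies `f(s) − f(t) ≤ s − t` for all `0 < t ≤ s`;
in particular it is Lipschitz continuous on `(0,∞)`. -/
theorem statement5 (n : ℕ) (μ : Measure (EuclideanSpace ℝ (Fin n))) [IsProbabilityMeasure μ]
    (hE : IsCompact (msupp μ)) (θ : ℝ) (hθ : θ ∈ Set.Ioc (0 : ℝ) 1) :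
    (∀ t s : ℝ, 0 < t → t ≤ s → dimPtheta s θ μ - dimPtheta t θ μ ≤ s - t) ∧
    LipschitzOnWith 1 (fun h : ℝ => dimPtheta h θ μ) (Set.Ioi 0) := by
  obtain ⟨hθ0, hθ1⟩ := hθ
  set S : ℝ → Set ℝ := fun h => {v : ℝ | v ∈ Set.Icc 0 h ∧ ∀ᵐ x ∂μ,
    Filter.liminf (fun r : ℝ => Ftheta v h θ μ x r / ENNReal.ofReal (r ^ v)) (𝓝[>] 0) = 0}
    with hS
  have hdim : ∀ h : ℝ, dimPtheta h θ μ = sSup (S h) := fun h => rfl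
  have hbdd : ∀ h : ℝ, BddAbove (S h) := fun h =>
    BddAbove.mono (fun v hv => hv.1) (bddAbove_Icc (a := 0) (b := h))
  have hnn : ∀ h : ℝ, 0 ≤ sSup (S h) := by
    intro h
    rcases Set.eq_empty_or_nonempty (S h) with he | ⟨v, hv⟩
    · rw [he, Real.sSup_empty]
    · exact le_trans hv.1.1 (le_csSup (hbdd h) hv)
  -- monotonicity of the sets
  have hmono : ∀ t s : ℝ, t ≤ s → S t ⊆ S s := by
    intro t s hts v hv
    refine ⟨⟨hv.1.1, hv.1.2.trans hts⟩, ?_⟩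
    filter_upwards [hv.2] with x hx
    refine liminf_transfer (c := 1) ENNReal.one_ne_top (fun r hr0 hr1 => ?_) hx
    rw [one_mul]
    exact ENNReal.div_le_div_right
      (Ftheta_mono μ x θ t s v r hθ0 hθ1 hv.1.1 hv.1.2 hts hr0) _
  -- diameter bound
  obtain ⟨C, hC⟩ := Metric.isBounded_iff.mp hE.isBounded
  set D : ℝ := max C 1 with hD
  have hD1 : (1:ℝ) ≤ D := le_max_right C 1
  -- key transfer
  have hkey : ∀ t s u : ℝ, t ≤ s → u ∈ S s → s - t < u → u - (s - t) ∈ S t := by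
    intro t s u hts hu hstu
    refine ⟨⟨by linarith, by have := hu.1.2; linarith⟩, ?_⟩
    filter_upwards [hu.2, ae_mem_msupp μ] with x hx hxs
    have hae : ∀ᵐ y ∂μ, y = x ∨ ‖x - y‖ ≤ D := by
      filter_upwards [ae_mem_msupp μ] with y hy
      right
      calc ‖x - y‖ = dist x y := (dist_eq_norm x y).symm
        _ ≤ C := hC hxs hy
        _ ≤ D := le_max_left C 1
    exact liminf_transfer (c := ENNReal.ofReal (D ^ (s - t))) ENNReal.ofReal_ne_top
      (fun r hr0 hr1 => Ftheta_main μ x θ t s u r D hts hu.1.2 hr0 hr1 hD1 hae) hx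
  -- the Lipschitz bound on sSup's
  have main1 : ∀ t s : ℝ, 0 < t → t ≤ s → sSup (S s) ≤ sSup (S t) + (s - t) := by
    intro t s ht hts
    refine Real.sSup_le (fun u hu => ?_) (by linarith [hnn t])
    rcases le_or_gt u (s - t) with h | h
    · linarith [hnn t]
    · have := le_csSup (hbdd t) (hkey t s u hts hu h)
      linarith
  have main2 : ∀ t s : ℝ, t ≤ s → sSup (S t) ≤ sSup (S s) := by
    intro t s hts
    exact Real.sSup_le (fun u hu => le_csSup (hbdd s) (hmono t s hts hu)) (hnn s)
  constructor
  · intro t s ht hts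
    rw [hdim, hdim]
    have := main1 t s ht hts
    linarith
  · refine LipschitzOnWith.of_dist_le_mul fun x hx y hy => ?_
    rw [NNReal.coe_one, one_mul, Real.dist_eq, Real.dist_eq, hdim, hdim]
    rcases le_total x y with hxy | hxy
    · have h1 := main2 x y hxy
      have h2 := main1 x y hx hxy
      rw [abs_sub_comm (sSup (S x)) (sSup (S y)), abs_of_nonneg (by linarith),
        abs_sub_comm x y, abs_of_nonneg (by linarith)]
      linarith
    · have h1 := main2 y x hxy
      have h2 := main1 y x hy hxy
      rw [abs_of_nonneg (by linarith), abs_of_nonneg (by linarith)]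
      linarith
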